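/- If w = uv is a Lyndon word (ALSW) with u, v nonempty and v the longest proper Lyndon suffix of w, then u is also a Lyndon word. -/
import Mathlib


/-- The lexicographic ordering on words with the convention that a proper prefix is
greater than the word extending it (`u ≻ uv` for `v ≠ 1`): `gtLex u v` means `u ≻ v`. -/
def gtLex {X : Type*} [LinearOrder X] : List X → List X → Prop
  | [], [] => False
  | [], _ :: _ => True
  | _ :: _, [] => False
  | a :: u, b :: v => b < a ∨ (a = b ∧ gtLex u v)

section Helpers

variable {X : Type*} [LinearOrder X]

theorem gtLex_nil_right (u : List X) : ¬ gtLex u [] := by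
  cases u <;> simp [gtLex]

theorem gtLex_irrefl (u : List X) : ¬ gtLex u u := by
  induction u with
  | nil => simp [gtLex]
  | cons a u ih => simp [gtLex, ih]

theorem gtLex_asymm {u v : List X} (h : gtLex u v) : ¬ gtLex v u := by
  induction u generalizing v with
  | nil => cases v <;> simp [gtLex]
  | cons a u ih =>
    cases v with
    | nil => simp [gtLex] at h
    | cons b v =>
      simp only [gtLex] at h ⊢
      rintro (h' | ⟨e, h'⟩)
      · rcases h with h | ⟨rfl, h⟩
        · exact absurd h (lt_asymm h')
        · exact absurd h' (lt_irrefl _)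
      · rcases h with h | ⟨rfl, h⟩
        · exact absurd (e ▸ h) (lt_irrefl _)
        · exact ih h h'

theorem gtLex_trans {u v w : List X} (h1 : gtLex u v) (h2 : gtLex v w) : gtLex u w := by
  induction u generalizing v w with
  | nil =>
    cases v with
    | nil => simp [gtLex] at h1
    | cons b v => cases w with
      | nil => simp [gtLex] at h2
      | cons c w => simp [gtLex]
  | cons a u ih =>
    cases v with
    | nil => simp [gtLex] at h1
    | cons b v =>
      cases w with
      | nil => simp [gtLex] at h2
      | cons c w =>
        simp only [gtLex] at h1 h2 ⊢
        rcases h1 with h1 | ⟨rfl, h1⟩ <;> rcases h2 with h2 | ⟨rfl, h2⟩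
        · exact Or.inl (h2.trans h1)
        · exact Or.inl h1
        · exact Or.inl h2
        · exact Or.inr ⟨rfl, ih h1 h2⟩

theorem gtLex_total (u v : List X) : u = v ∨ gtLex u v ∨ gtLex v u := by
  induction u generalizing v with
  | nil => cases v <;> simp [gtLex]
  | cons a u ih =>
    cases v with
    | nil => simp [gtLex]
    | cons b v =>
      rcases lt_trichotomy a b with h | rfl | h
      · exact Or.inr (Or.inr (Or.inl h))
      · rcases ih v with rfl | h | h
        · exact Or.inl rfl
        · exact Or.inr (Or.inl (Or.inr ⟨rfl, h⟩))
        · exact Or.inr (Or.inr (Or.inr ⟨rfl, h⟩))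
      · exact Or.inr (Or.inl (Or.inl h))

theorem gtLex_append_left (c u v : List X) : gtLex (c ++ u) (c ++ v) ↔ gtLex u v := by
  induction c with
  | nil => rfl
  | cons a c ih => simpa [gtLex] using ih

theorem gtLex_extend (u : List X) {t : List X} (ht : t ≠ []) : gtLex u (u ++ t) := by
  have : gtLex (u ++ []) (u ++ t) := by
    rw [gtLex_append_left]
    cases t with
    | nil => exact absurd rfl ht
    | cons a t => trivial
  simpa using this

theorem gtLex_of_diff {a b : X} (c u' v' : List X) (h : b < a) :
    gtLex (c ++ a :: u') (c ++ b :: v') := by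
  induction c with
  | nil => exact Or.inl h
  | cons x c ih => exact Or.inr ⟨rfl, ih⟩

theorem gtLex_decomp {u v : List X} (h : gtLex u v) :
    (∃ t, t ≠ [] ∧ v = u ++ t) ∨
      ∃ c a b u' v', b < a ∧ u = c ++ a :: u' ∧ v = c ++ b :: v' := by
  induction u generalizing v with
  | nil =>
    cases v with
    | nil => simp [gtLex] at h
    | cons b v => exact Or.inl ⟨b :: v, by simp, by simp⟩
  | cons a u ih =>
    cases v with
    | nil => simp [gtLex] at h
    | cons b v =>
      rcases h with h | ⟨rfl, h⟩
      · exact Or.inr ⟨[], a, b, u, v, h, rfl, rfl⟩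
      · rcases ih h with ⟨t, ht, rfl⟩ | ⟨c, x, y, u', v', hxy, rfl, rfl⟩
        · exact Or.inl ⟨t, ht, rfl⟩
        · exact Or.inr ⟨a :: c, x, y, u', v', hxy, rfl, rfl⟩

theorem gtLex_cancel_right {p q x : List X} (hlen : p.length = q.length)
    (h : gtLex (p ++ x) (q ++ x)) : gtLex p q := by
  induction p generalizing q with
  | nil =>
    cases q with
    | nil => exact absurd h (gtLex_irrefl x)
    | cons b q => simp at hlen
  | cons a p ih =>
    cases q with
    | nil => simp at hlen
    | cons b q =>
      rcases h with h | ⟨rfl, h⟩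
      · exact Or.inl h
      · exact Or.inr ⟨rfl, ih (by simpa using hlen) h⟩

end Helpers

/-- `w` is an associative Lyndon–Shirshov word: `w` is nonempty and `w ≻ v ++ u` for every
factorization `w = u ++ v` into nonempty words. -/
def IsALSW {X : Type*} [LinearOrder X] (w : List X) : Prop :=
  w ≠ [] ∧ ∀ u v : List X, u ≠ [] → v ≠ [] → w = u ++ v → gtLex w (v ++ u)

section Helpers

variable {X : Type*} [LinearOrder X]

/-- An ALSW is `gtLex`-greater than each of its proper nonempty suffixes. -/
theorem IsALSW.gtLex_of_suffix {w s : List X} (hw : IsALSW w) {p : List X}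
    (hp : p ≠ []) (hs : s ≠ []) (heq : w = p ++ s) : gtLex w s := by
  have h1 : gtLex w (s ++ p) := hw.2 p s hp hs heq
  rcases gtLex_decomp h1 with ⟨t, ht, hteq⟩ | ⟨c, a, b, u', v', hba, hw1, hsp⟩
  · exfalso
    have hl := congrArg List.length hteq
    have ht' : 0 < t.length := List.length_pos_iff.2 ht
    simp [heq] at hl
    omega
  · by_cases hc : c.length + 1 ≤ s.length
    · -- the first difference occurs inside `s`
      have hpre : c ++ [b] <+: s := by
        have h1' : c ++ [b] <+: s ++ p := by rw [hsp]; exact ⟨v', by simp⟩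
        exact List.prefix_of_prefix_length_le h1' (List.prefix_append s p) (by simpa using hc)
      obtain ⟨s₂, hs₂⟩ := hpre
      have hseq : s = c ++ b :: s₂ := by rw [← hs₂]; simp
      rw [hw1, hseq]
      exact gtLex_of_diff c u' s₂ hba
    · -- `s` is a prefix of `c`, hence a border of `w`: contradiction
      exfalso
      push_neg at hc
      have hpre : s <+: c := by
        have h1' : c <+: s ++ p := by rw [hsp]; exact ⟨b :: v', rfl⟩
        exact List.prefix_of_prefix_length_le (List.prefix_append s p) h1' (by omega)
      obtain ⟨c₂, rfl⟩ := hpre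
      set t2 : List X := c₂ ++ a :: u' with ht2def
      have hwst : w = s ++ t2 := by rw [hw1]; simp [ht2def]
      have ht2 : t2 ≠ [] := by simp [ht2def]
      have h2 : gtLex w (t2 ++ s) := hw.2 s t2 hs ht2 hwst
      have hlen : p.length = t2.length := by
        have e1 := congrArg List.length heq
        have e2 := congrArg List.length hwst
        simp at e1 e2
        omega
      have h3 : gtLex p t2 := by
        rw [heq] at h2
        exact gtLex_cancel_right hlen h2
      have h4 : gtLex t2 p := by
        have := h1
        rw [hwst] at this
        exact (gtLex_append_left s t2 p).1 this
      exact gtLex_asymm h3 h4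

/-- Converse: a nonempty word greater than all its proper nonempty suffixes is an ALSW. -/
theorem isALSW_of_gtLex_suffix {w : List X} (hne : w ≠ [])
    (h : ∀ s, s <:+ w → s ≠ w → s ≠ [] → gtLex w s) : IsALSW w := by
  refine ⟨hne, fun p s hp hs heq => ?_⟩
  have hsw : s ≠ w := by
    intro e
    rw [← e] at heq
    exact hp (List.self_eq_append_left.mp heq)
  have hws : gtLex w s := h s ⟨p, heq.symm⟩ hsw hs
  rcases gtLex_decomp hws with ⟨t, ht, hteq⟩ | ⟨c, a, b, w₁, s₁, hba, hw1, hs1⟩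
  · exfalso
    have hl := congrArg List.length hteq
    have h1 := congrArg List.length heq
    have : 0 < p.length := List.length_pos_iff.2 hp
    have : 0 < t.length := List.length_pos_iff.2 ht
    simp at hl h1
    omega
  · rw [hw1, hs1]
    have : (c ++ b :: s₁) ++ p = c ++ b :: (s₁ ++ p) := by simp
    rw [this]
    exact gtLex_of_diff c w₁ (s₁ ++ p) hba

/-- The longest proper Lyndon suffix is the `gtLex`-least proper nonempty suffix. -/
theorem gtLex_longest_suffix {w u v : List X} (hv : v ≠ []) (heq : w = u ++ v)
    (hvL : IsALSW v)
    (hmax : ∀ v' : List X, v' <:+ w → v' ≠ w → IsALSW v' → v'.length ≤ v.length) :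
    ∀ n (t : List X), t.length ≤ n → t <:+ w → t ≠ w → t ≠ [] → t = v ∨ gtLex v t := by
  intro n
  induction n with
  | zero =>
    intro t hn _ _ ht0
    exact absurd (List.length_eq_zero_iff.mp (Nat.le_zero.mp hn)) ht0
  | succ n ih =>
    intro t hn hsuf htw ht0
    by_cases hlen : t.length ≤ v.length
    · have htv : t <:+ v := List.suffix_of_suffix_length_le hsuf ⟨u, heq.symm⟩ hlen
      by_cases htev : t = v
      · exact Or.inl htev
      · obtain ⟨p, hp⟩ := htv
        have hpne : p ≠ [] := by
          intro e
          rw [e, List.nil_append] at hp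
          exact htev hp
        exact Or.inr (hvL.gtLex_of_suffix hpne ht0 hp.symm)
    · push_neg at hlen
      have hnot : ¬ IsALSW t := fun hL => absurd (hmax t hsuf htw hL) (by omega)
      have hex : ∃ s, s <:+ t ∧ s ≠ t ∧ s ≠ [] ∧ ¬ gtLex t s := by
        by_contra hcon
        push_neg at hcon
        exact hnot (isALSW_of_gtLex_suffix ht0 fun s h1 h2 h3 => hcon s h1 h2 h3)
      obtain ⟨s, hst, hsnt, hs0, hngt⟩ := hex
      have hslen : s.length < t.length := by
        rcases Nat.lt_or_ge s.length t.length with h | h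
        · exact h
        · exact absurd (hst.eq_of_length (le_antisymm hst.length_le h)) hsnt
      have hgt : gtLex s t := by
        rcases gtLex_total s t with e | h | h
        · exact absurd e hsnt
        · exact h
        · exact absurd h hngt
      have hsw : s <:+ w := hst.trans hsuf
      have htwlen : t.length < w.length := by
        rcases Nat.lt_or_ge t.length w.length with h | h
        · exact h
        · exact absurd (hsuf.eq_of_length (le_antisymm hsuf.length_le h)) htw
      have hsnw : s ≠ w := by
        intro e
        rw [e] at hslen
        omega
      rcases ih s (by omega) hsw hsnw hs0 with rfl | h
      · exact Or.inr hgt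
      · exact Or.inr (gtLex_trans h hgt)

end Helpers

/-- If `w = u ++ v` is an ALSW with `u, v` nonempty and `v` the longest proper Lyndon
suffix of `w`, then `u` is an ALSW as well. -/
theorem isALSW_of_longest_lyndon_suffix {X : Type*} [LinearOrder X] (w u v : List X)
    (hw : IsALSW w) (hu : u ≠ []) (hv : v ≠ []) (heq : w = u ++ v) (hvL : IsALSW v)
    (hmax : ∀ v' : List X, v' <:+ w → v' ≠ w → IsALSW v' → v'.length ≤ v.length) :
    IsALSW u := by

  apply isALSW_of_gtLex_suffix hu
  intro s hsuf hsne hs0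
  by_contra hns
  have hsu : gtLex s u := by
    rcases gtLex_total s u with e | h | h
    · exact absurd e hsne
    · exact h
    · exact absurd h hns
  obtain ⟨p, hp⟩ := hsuf
  have hpne : p ≠ [] := by
    intro e
    rw [e, List.nil_append] at hp
    exact hsne hp
  -- `s ++ v` is a proper nonempty suffix of `w`
  have hwsv : w = p ++ (s ++ v) := by rw [heq, ← hp]; simp
  have hsv0 : s ++ v ≠ [] := by simp [hv]
  have hA : gtLex w (s ++ v) := hw.gtLex_of_suffix hpne hsv0 hwsv
  rcases gtLex_decomp hsu with ⟨t, ht, hut⟩ | ⟨c, a, b, s', u', hba, hseq, hueq⟩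
  · -- `s` is a proper prefix of `u`: `u = s ++ t`
    have hwst : w = s ++ (t ++ v) := by rw [heq, hut]; simp
    have h1 : gtLex (t ++ v) v := by
      have := hA
      rw [hwst] at this
      exact (gtLex_append_left s (t ++ v) v).1 this
    have htv : (t ++ v) <:+ w := ⟨s, hwst.symm⟩
    have htvnw : t ++ v ≠ w := by
      intro e
      have hl := congrArg List.length hwst
      have hl2 := congrArg List.length e
      have : 0 < s.length := List.length_pos_iff.2 hs0
      simp at hl hl2
      omega
    have htv0 : t ++ v ≠ [] := by simp [hv]
    rcases gtLex_longest_suffix hv heq hvL hmax (t ++ v).length (t ++ v) le_rfl htv htvnw htv0 with e | h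
    · have hl := congrArg List.length e
      have : 0 < t.length := List.length_pos_iff.2 ht
      rw [List.length_append] at hl
      omega
    · exact gtLex_asymm h h1
  · -- first difference: contradiction with `hA`
    have h5 : gtLex (s ++ v) w := by
      rw [heq, hseq, hueq]
      have e1 : (c ++ a :: s') ++ v = c ++ a :: (s' ++ v) := by simp
      have e2 : (c ++ b :: u') ++ v = c ++ b :: (u' ++ v) := by simp
      rw [e1, e2]
      exact gtLex_of_diff c (s' ++ v) (u' ++ v) hba
    exact gtLex_asymm hA h5
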